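/- Let V be a real Hilbert space, r > 0, and F : B_r → ℝ a C² function on the ball B_r of radius r centered at 0, satisfying: F(0) = c, F(ψ) > c for all ψ ∈ B_r \ {0}, and there exist C > 0 and an orthogonal projection P : V → V whose kernel is finite-dimensional such that D²F(0)(ψ,ψ) ≥ C‖Pψ‖² for all ψ ∈ V. Then there exists ρ ∈ (0, r) such that: for any sequence ψ_ν ∈ B_ρ with F(ψ_ν) → c, one has ‖ψ_ν‖ → 0. -/

import Mathlib

open Filter Topology

lemma auxMid14 {V : Type*} [NormedAddCommGroup V] [NormedSpace ℝ V]
    {F : V → ℝ} {s : Set V} (hs : IsOpen s) (hF : ContDiffOn ℝ 2 F s)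
    (x₀ d : V) (a : ℝ)
    (hseg : ∀ t : ℝ, t ∈ Set.Icc (0:ℝ) 1 → x₀ + t • d ∈ s)
    (ha : ∀ t : ℝ, t ∈ Set.Icc (0:ℝ) 1 →
      a ≤ fderiv ℝ (fderiv ℝ F) (x₀ + t • d) d d) :
    a / 4 ≤ F x₀ + F (x₀ + d) - 2 * F (x₀ + (2⁻¹ : ℝ) • d) := by
  set γ : ℝ → V := fun t => x₀ + t • d with hγdef
  have hγ : ∀ t : ℝ, HasDerivAt γ d t := by
    intro t
    have h1 : HasDerivAt (fun t : ℝ => t • d) ((1:ℝ) • d) t :=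
      (hasDerivAt_id t).smul_const d
    have h2 := h1.const_add x₀
    rw [one_smul] at h2
    exact h2
  have hγc : Continuous γ := by
    have : Continuous fun t : ℝ => t • d := continuous_id.smul continuous_const
    exact continuous_const.add this
  have hFdiff : ∀ x ∈ s, HasFDerivAt F (fderiv ℝ F x) x := fun x hx =>
    ((hF.contDiffAt (hs.mem_nhds hx)).differentiableAt (by norm_num)).hasFDerivAt
  have hGcd : ContDiffOn ℝ 1 (fderiv ℝ F) s := hF.fderiv_of_isOpen hs (by norm_num)
  have hGdiff : ∀ x ∈ s, HasFDerivAt (fderiv ℝ F) (fderiv ℝ (fderiv ℝ F) x) x := fun x hx =>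
    ((hGcd.contDiffAt (hs.mem_nhds hx)).differentiableAt (by norm_num)).hasFDerivAt
  set g : ℝ → ℝ := fun t => F (γ t) - a/2 * t^2 with hgdef
  set g1 : ℝ → ℝ := fun t => fderiv ℝ F (γ t) d - a * t with hg1def
  have hg' : ∀ t ∈ Set.Icc (0:ℝ) 1, HasDerivAt g (g1 t) t := by
    intro t ht
    have h1 : HasDerivAt (fun u : ℝ => F (γ u)) (fderiv ℝ F (γ t) d) t :=
      (hFdiff _ (hseg t ht)).comp_hasDerivAt t (hγ t)
    have h2 : HasDerivAt (fun u : ℝ => a/2 * u^2) (a * t) t := by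
      have := (hasDerivAt_pow 2 t).const_mul (a/2)
      refine this.congr_deriv ?_
      ring
    exact h1.sub h2
  have hg1' : ∀ t ∈ Set.Icc (0:ℝ) 1,
      HasDerivAt g1 (fderiv ℝ (fderiv ℝ F) (γ t) d d - a) t := by
    intro t ht
    have h1 : HasDerivAt (fun u : ℝ => fderiv ℝ F (γ u))
        (fderiv ℝ (fderiv ℝ F) (γ t) d) t :=
      (hGdiff _ (hseg t ht)).comp_hasDerivAt t (hγ t)
    have h2 : HasDerivAt (fun u : ℝ => fderiv ℝ F (γ u) d)
        (fderiv ℝ (fderiv ℝ F) (γ t) d d) t := by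
      have := h1.clm_apply (hasDerivAt_const t d)
      simpa using this
    have h3 : HasDerivAt (fun u : ℝ => a * u) a t := by
      simpa using (hasDerivAt_id t).const_mul a
    exact h2.sub h3
  have hint : interior (Set.Icc (0:ℝ) 1) = Set.Ioo 0 1 := interior_Icc
  have hderiv_eq : ∀ t ∈ Set.Ioo (0:ℝ) 1, deriv g =ᶠ[nhds t] g1 := by
    intro t ht
    filter_upwards [isOpen_Ioo.mem_nhds ht] with u hu
    exact (hg' u (Set.Ioo_subset_Icc_self hu)).deriv
  have hg2 : ∀ t ∈ Set.Ioo (0:ℝ) 1,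
      HasDerivAt (deriv g) (fderiv ℝ (fderiv ℝ F) (γ t) d d - a) t := by
    intro t ht
    exact (hg1' t (Set.Ioo_subset_Icc_self ht)).congr_of_eventuallyEq (hderiv_eq t ht)
  have hconv : ConvexOn ℝ (Set.Icc (0:ℝ) 1) g := by
    apply convexOn_of_deriv2_nonneg (convex_Icc 0 1)
    · exact ((hF.continuousOn.comp hγc.continuousOn (fun t ht => hseg t ht)).sub
        ((continuous_const.mul (continuous_pow 2)).continuousOn))
    · intro t ht
      rw [hint] at ht
      exact ((hg' t (Set.Ioo_subset_Icc_self ht)).differentiableAt).differentiableWithinAt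
    · intro t ht
      rw [hint] at ht
      exact ((hg2 t ht).differentiableAt).differentiableWithinAt
    · intro t ht
      rw [hint] at ht
      have : deriv (deriv g) t = fderiv ℝ (fderiv ℝ F) (γ t) d d - a := (hg2 t ht).deriv
      have h2 : deriv^[2] g t = deriv (deriv g) t := by
        simp [Function.iterate_succ, Function.iterate_one]
      rw [h2, this]
      have := ha t (Set.Ioo_subset_Icc_self ht)
      linarith
  have hmid := hconv.2 (Set.left_mem_Icc.2 (by norm_num)) (Set.right_mem_Icc.2 (by norm_num))
      (by norm_num : (0:ℝ) ≤ 1/2) (by norm_num : (0:ℝ) ≤ 1/2) (by norm_num)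
  have e0 : γ 0 = x₀ := by simp [hγdef]
  have e1 : γ 1 = x₀ + d := by simp [hγdef]
  have eh : ((1:ℝ)/2) • (0:ℝ) + ((1:ℝ)/2) • (1:ℝ) = 2⁻¹ := by norm_num
  have ehγ : γ (2⁻¹ : ℝ) = x₀ + (2⁻¹ : ℝ) • d := rfl
  rw [eh] at hmid
  simp only [hgdef, e0, e1, ehγ, smul_eq_mul] at hmid
  nlinarith [hmid]

set_option maxHeartbeats 2000000 in
/-- Abstract orbital-stability lemma (Proposition 3.8.3): on a real Hilbert
space `V`, let `F` be `C²` on the ball `B_r`, with `F(0) = c`, `F > c` on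
`B_r \ {0}`, and suppose there are `C > 0` and an orthogonal projection `P`
with finite-dimensional kernel such that `D²F(0)(ψ,ψ) ≥ C‖Pψ‖²`. Then there
is `ρ ∈ (0, r)` such that any sequence `ψ_ν ∈ B_ρ` with `F(ψ_ν) → c`
satisfies `‖ψ_ν‖ → 0`. -/
theorem stmt14 {V : Type*} [NormedAddCommGroup V] [InnerProductSpace ℝ V]
    [CompleteSpace V] (r c C : ℝ) (hr : 0 < r) (hC : 0 < C) (F : V → ℝ)
    (hF : ContDiffOn ℝ 2 F (Metric.ball 0 r))
    (hF0 : F 0 = c)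
    (hFpos : ∀ ψ ∈ Metric.ball (0 : V) r, ψ ≠ 0 → c < F ψ)
    (P : V →L[ℝ] V)
    (hidem : ∀ x, P (P x) = P x)
    (hsym : ∀ x y : V, inner ℝ (P x) y = (inner ℝ x (P y) : ℝ))
    (hker : FiniteDimensional ℝ (LinearMap.ker (P : V →ₗ[ℝ] V)))
    (hbound : ∀ ψ : V, C * ‖P ψ‖ ^ 2 ≤ iteratedFDeriv ℝ 2 F 0 ![ψ, ψ]) :
    ∃ ρ : ℝ, 0 < ρ ∧ ρ < r ∧
      ∀ ψ : ℕ → V, (∀ ν, ψ ν ∈ Metric.closedBall (0 : V) ρ) →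
        Tendsto (fun ν => F (ψ ν)) atTop (nhds c) →
        Tendsto (fun ν => ‖ψ ν‖) atTop (nhds 0) := by
  classical
  have hball : IsOpen (Metric.ball (0:V) r) := Metric.isOpen_ball
  have h0mem : (0:V) ∈ Metric.ball (0:V) r := Metric.mem_ball_self hr
  set G := fderiv ℝ F with hGdef
  set H := fderiv ℝ G with hHdef
  have hFge : ∀ x ∈ Metric.ball (0:V) r, c ≤ F x := by
    intro x hx
    rcases eq_or_ne x 0 with h | h
    · rw [h, hF0]
    · exact (hFpos x hx h).le
  have hGcd : ContDiffOn ℝ 1 G (Metric.ball 0 r) := hF.fderiv_of_isOpen hball (by norm_num)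
  have hHcont : ContinuousOn H (Metric.ball 0 r) :=
    hGcd.continuousOn_fderiv_of_isOpen hball le_rfl
  have hHat0 : ContinuousAt H 0 := hHcont.continuousAt (hball.mem_nhds h0mem)
  obtain ⟨δ, hδpos, hδ⟩ := (Metric.continuousAt_iff (f := H) (a := 0)).1 (by exact hHat0) (C/4) (by positivity)
  have hminpos : 0 < min δ r := lt_min hδpos hr
  set ρ := min δ r / 4 with hρdef
  have hρpos : 0 < ρ := by positivity
  have hρr : ρ < r := by
    have := min_le_right δ r; rw [hρdef]; linarith
  set R := 2 * ρ with hRdef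
  have hRr : R < r := by
    have := min_le_right δ r; rw [hRdef, hρdef]; linarith
  have hRδ : R < δ := by
    have := min_le_left δ r; rw [hRdef, hρdef]; linarith
  have hρR : ρ ≤ R := by rw [hRdef]; linarith
  have hsub : Metric.closedBall (0:V) R ⊆ Metric.ball (0:V) r := by
    intro x hx
    rw [Metric.mem_closedBall] at hx
    rw [Metric.mem_ball]
    linarith
  have hHball : ∀ x ∈ Metric.closedBall (0:V) R, ‖H x - H 0‖ ≤ C/4 := by
    intro x hx
    rw [Metric.mem_closedBall, dist_zero_right] at hx
    have : dist x 0 < δ := by rw [dist_zero_right]; linarith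
    have := hδ this
    have this : ‖H x - H 0‖ < C/4 := (dist_eq_norm (H x) (H 0)).symm.trans_lt this
    linarith
  -- coercivity at 0 on range P
  have hB : ∀ d : V, P d = d → C * ‖d‖^2 ≤ H 0 d d := by
    intro d hd
    have h1 := hbound d
    rw [iteratedFDeriv_two_apply] at h1
    simpa [hGdef, hHdef, hd] using h1
  have hcoer : ∀ x ∈ Metric.closedBall (0:V) R, ∀ d : V, P d = d →
      3*C/4 * ‖d‖^2 ≤ H x d d := by
    intro x hx d hd
    have h1 : ‖(H x - H 0) d d‖ ≤ ‖H x - H 0‖ * ‖d‖ * ‖d‖ := by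
      calc ‖(H x - H 0) d d‖ ≤ ‖(H x - H 0) d‖ * ‖d‖ := ((H x - H 0) d).le_opNorm d
        _ ≤ ‖H x - H 0‖ * ‖d‖ * ‖d‖ :=
          mul_le_mul_of_nonneg_right ((H x - H 0).le_opNorm d) (norm_nonneg d)
    have h2 : ‖H x - H 0‖ * ‖d‖ * ‖d‖ ≤ C/4 * ‖d‖^2 := by
      have := hHball x hx
      nlinarith [norm_nonneg d, norm_nonneg (H x - H 0)]
    have h3 : |H x d d - H 0 d d| ≤ C/4 * ‖d‖^2 := by
      have e : (H x - H 0) d d = H x d d - H 0 d d := by simp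
      rw [e] at h1
      calc |H x d d - H 0 d d| = ‖H x d d - H 0 d d‖ := (Real.norm_eq_abs _).symm
        _ ≤ ‖H x - H 0‖ * ‖d‖ * ‖d‖ := h1
        _ ≤ C/4 * ‖d‖^2 := h2
    have h4 := hB d hd
    have h5 := (abs_le.1 h3).1
    linarith
  -- differentiability facts
  have hFdiff : ∀ x ∈ Metric.ball (0:V) r, DifferentiableAt ℝ F x := fun x hx =>
    (hF.contDiffAt (hball.mem_nhds hx)).differentiableAt (by norm_num)
  have hGdiff : ∀ x ∈ Metric.ball (0:V) r, DifferentiableAt ℝ G x := fun x hx =>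
    (hGcd.contDiffAt (hball.mem_nhds hx)).differentiableAt (by norm_num)
  -- bound on ‖G‖ on closed ball R
  set M := ‖H 0‖ + C/4 with hMdef
  have hM0 : 0 ≤ M := by
    have := norm_nonneg (H 0); rw [hMdef]; linarith
  have hR0 : 0 ≤ R := by rw [hRdef]; linarith
  set L₀ := ‖G 0‖ + M * R with hLdef
  have hL₀nonneg : 0 ≤ L₀ := by
    have h1 := norm_nonneg (G 0)
    have h2 : 0 ≤ M * R := mul_nonneg hM0 hR0
    rw [hLdef]; linarith
  have hGnorm : ∀ x ∈ Metric.closedBall (0:V) R, ‖G x‖ ≤ L₀ := by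
    intro x hx
    have hconv : Convex ℝ (Metric.closedBall (0:V) R) := convex_closedBall _ _
    have hbd : ∀ y ∈ Metric.closedBall (0:V) R, ‖fderiv ℝ G y‖ ≤ M := by
      intro y hy
      have h1 := norm_sub_norm_le (H y) (H 0)
      have h2 := hHball y hy
      rw [← hHdef, hMdef]
      linarith
    have hdf : ∀ y ∈ Metric.closedBall (0:V) R, DifferentiableAt ℝ G y := fun y hy =>
      hGdiff y (hsub hy)
    have h0R : (0:V) ∈ Metric.closedBall (0:V) R := Metric.mem_closedBall_self hR0
    have hmvt := hconv.norm_image_sub_le_of_norm_fderiv_le hdf hbd h0R hx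
    rw [sub_zero] at hmvt
    rw [Metric.mem_closedBall, dist_zero_right] at hx
    have hGx : ‖G x - G 0‖ ≤ M * R := le_trans hmvt (mul_le_mul_of_nonneg_left hx hM0)
    have h3 := norm_sub_norm_le (G x) (G 0)
    rw [hLdef]
    linarith
  have hFlip : ∀ x ∈ Metric.closedBall (0:V) R, ∀ y ∈ Metric.closedBall (0:V) R,
      |F x - F y| ≤ L₀ * ‖x - y‖ := by
    intro x hx y hy
    have hconv : Convex ℝ (Metric.closedBall (0:V) R) := convex_closedBall _ _
    have hdf : ∀ z ∈ Metric.closedBall (0:V) R, DifferentiableAt ℝ F z := fun z hz =>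
      hFdiff z (hsub hz)
    have hbd : ∀ z ∈ Metric.closedBall (0:V) R, ‖fderiv ℝ F z‖ ≤ L₀ := fun z hz => by
      rw [← hGdef]; exact hGnorm z hz
    have := hconv.norm_image_sub_le_of_norm_fderiv_le hdf hbd hy hx
    rwa [Real.norm_eq_abs] at this
  refine ⟨ρ, hρpos, hρr, ?_⟩
  intro ψ hψmem hψF
  suffices h : Tendsto ψ atTop (𝓝 0) by
    have := (continuous_norm.tendsto (0:V)).comp h
    rw [norm_zero] at this
    exact this
  apply tendsto_of_subseq_tendsto
  intro ns hns
  -- the kernel parts, in the finite-dimensional kernel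
  have hmemker : ∀ k : ℕ, ψ (ns k) - P (ψ (ns k)) ∈ LinearMap.ker (P : V →ₗ[ℝ] V) := by
    intro k
    rw [LinearMap.mem_ker, ContinuousLinearMap.coe_coe]
    have : P (ψ (ns k) - P (ψ (ns k))) = P (ψ (ns k)) - P (P (ψ (ns k))) := by
      rw [map_sub]
    rw [this, hidem, sub_self]
  set vv : ℕ → LinearMap.ker (P : V →ₗ[ℝ] V) := fun k => ⟨ψ (ns k) - P (ψ (ns k)), hmemker k⟩ with hvvdef
  have hψnorm : ∀ ν, ‖ψ ν‖ ≤ ρ := by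
    intro ν
    have := hψmem ν
    rwa [Metric.mem_closedBall, dist_zero_right] at this
  set Rv := ρ + ‖P‖ * ρ with hRvdef
  have hvvmem : ∀ k, vv k ∈ Metric.closedBall (0 : LinearMap.ker (P : V →ₗ[ℝ] V)) Rv := by
    intro k
    rw [Metric.mem_closedBall, dist_zero_right]
    have h1 : ‖(vv k : V)‖ ≤ ρ + ‖P‖ * ρ := by
      calc ‖ψ (ns k) - P (ψ (ns k))‖ ≤ ‖ψ (ns k)‖ + ‖P (ψ (ns k))‖ := norm_sub_le _ _
        _ ≤ ρ + ‖P‖ * ρ := by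
          have h2 := P.le_opNorm (ψ (ns k))
          have h3 := hψnorm (ns k)
          have h4 : ‖P (ψ (ns k))‖ ≤ ‖P‖ * ρ :=
            le_trans h2 (mul_le_mul_of_nonneg_left h3 (norm_nonneg _))
          linarith
    exact h1
  have hcompact : IsCompact (Metric.closedBall (0 : LinearMap.ker (P : V →ₗ[ℝ] V)) Rv) :=
    isCompact_closedBall _ _
  obtain ⟨w, hwmem, ms, hms, hvw⟩ := hcompact.tendsto_subseq hvvmem
  refine ⟨ms, ?_⟩
  set φ : ℕ → V := fun k => ψ (ns (ms k)) with hφdef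
  set uu : ℕ → V := fun k => P (φ k) with huudef
  set v : ℕ → V := fun k => (vv (ms k) : V) with hvdef
  have hv : Tendsto v atTop (𝓝 ((w : V))) :=
    ((continuous_subtype_val.tendsto w).comp hvw)
  have hvC : CauchySeq v := hv.cauchySeq
  have hFφ : Tendsto (fun k => F (φ k)) atTop (𝓝 c) :=
    hψF.comp (hns.comp hms.tendsto_atTop)
  have hφvu : ∀ k, φ k = uu k + v k := by
    intro k
    simp only [huudef, hvdef, hvvdef, hφdef]
    abel
  have hφcb : ∀ k, φ k ∈ Metric.closedBall (0:V) R := by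
    intro k
    rw [Metric.mem_closedBall, dist_zero_right]
    exact le_trans (hψnorm _) hρR
  have hFφge : ∀ k, c ≤ F (φ k) := fun k => hFge _ (hsub (hφcb k))
  -- key inequality
  have key : ∀ m n : ℕ, ‖v m - v n‖ ≤ ρ →
      3*C/16 * ‖uu m - uu n‖^2 ≤ (F (φ m) - c) + (F (φ n) - c) + L₀ * ‖v m - v n‖ := by
    intro m n hvmn
    set d := uu m - uu n with hddef
    set x₀ := uu n + v m with hx₀def
    have hx₀d : x₀ + d = φ m := by
      rw [hx₀def, hddef, hφvu m]; abel
    have hx₀φ : x₀ - φ n = v m - v n := by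
      rw [hx₀def, hφvu n]; abel
    have hx₀norm : ‖x₀‖ ≤ R := by
      have : x₀ = φ n + (v m - v n) := by rw [← hx₀φ]; abel
      rw [this]
      calc ‖φ n + (v m - v n)‖ ≤ ‖φ n‖ + ‖v m - v n‖ := norm_add_le _ _
        _ ≤ ρ + ρ := add_le_add (hψnorm _) hvmn
        _ = R := by rw [hRdef]; ring
    have hx₀dnorm : ‖x₀ + d‖ ≤ R := by
      rw [hx₀d]
      exact le_trans (hψnorm _) hρR
    have hsegR : ∀ t : ℝ, t ∈ Set.Icc (0:ℝ) 1 → x₀ + t • d ∈ Metric.closedBall (0:V) R := by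
      intro t ht
      obtain ⟨ht0, ht1⟩ := ht
      have he : x₀ + t • d = (1 - t) • x₀ + t • (x₀ + d) := by
        module
      rw [Metric.mem_closedBall, dist_zero_right, he]
      calc ‖(1 - t) • x₀ + t • (x₀ + d)‖ ≤ ‖(1 - t) • x₀‖ + ‖t • (x₀ + d)‖ := norm_add_le _ _
        _ = (1 - t) * ‖x₀‖ + t * ‖x₀ + d‖ := by
          rw [norm_smul, norm_smul, Real.norm_eq_abs, Real.norm_eq_abs,
            abs_of_nonneg (by linarith), abs_of_nonneg ht0]
        _ ≤ (1 - t) * R + t * R := by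
          have h1 : 0 ≤ 1 - t := by linarith
          exact add_le_add (mul_le_mul_of_nonneg_left hx₀norm h1)
            (mul_le_mul_of_nonneg_left hx₀dnorm ht0)
        _ = R := by ring
    have hPd : P d = d := by
      rw [hddef, huudef, map_sub, hidem, hidem]
    have haux := auxMid14 hball hF x₀ d (3*C/4 * ‖d‖^2)
      (fun t ht => hsub (hsegR t ht))
      (fun t ht => hcoer _ (hsegR t ht) d hPd)
    have hmid : c ≤ F (x₀ + (2⁻¹:ℝ) • d) :=
      hFge _ (hsub (hsegR 2⁻¹ (by norm_num)))
    have hFx₀ : F x₀ - F (φ n) ≤ L₀ * ‖v m - v n‖ := by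
      have h1 := hFlip x₀ (by rw [Metric.mem_closedBall, dist_zero_right]; exact hx₀norm)
        (φ n) (hφcb n)
      rw [hx₀φ] at h1
      exact le_trans (le_abs_self _) h1
    rw [hx₀d] at haux
    have hd4 : 3*C/4 * ‖d‖^2 / 4 = 3*C/16 * ‖d‖^2 := by ring
    rw [hd4] at haux
    calc 3*C/16 * ‖uu m - uu n‖^2 = 3*C/16 * ‖d‖^2 := by rw [← hddef]
      _ ≤ F x₀ + F (φ m) - 2 * F (x₀ + (2⁻¹:ℝ) • d) := haux
      _ ≤ F x₀ + F (φ m) - 2 * c := by linarith [hmid]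
      _ ≤ (F (φ n) + L₀ * ‖v m - v n‖) + F (φ m) - 2*c := by linarith [hFx₀]
      _ = (F (φ m) - c) + (F (φ n) - c) + L₀ * ‖v m - v n‖ := by ring
  -- Cauchy sequence of projections
  have hCauchy : CauchySeq uu := by
    rw [Metric.cauchySeq_iff]
    intro ε hε
    set ε' := 3*C/16 * ε^2 with hε'def
    have hε'pos : 0 < ε' := by positivity
    obtain ⟨N₁, hN₁⟩ := (Metric.tendsto_atTop.1 hFφ) (ε'/3) (by positivity)
    have hδv : 0 < min ρ (ε'/(3*(L₀+1))) := by
      apply lt_min hρpos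
      positivity
    obtain ⟨N₂, hN₂⟩ := Metric.cauchySeq_iff.1 hvC _ hδv
    refine ⟨max N₁ N₂, ?_⟩
    intro m hm n hn
    have hm1 : N₁ ≤ m := le_trans (le_max_left _ _) hm
    have hn1 : N₁ ≤ n := le_trans (le_max_left _ _) hn
    have hm2 : N₂ ≤ m := le_trans (le_max_right _ _) hm
    have hn2 : N₂ ≤ n := le_trans (le_max_right _ _) hn
    have hvmn := hN₂ m hm2 n hn2
    rw [dist_eq_norm] at hvmn
    have hvmnρ : ‖v m - v n‖ ≤ ρ := le_of_lt (lt_of_lt_of_le hvmn (min_le_left _ _))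
    have hvmnε : ‖v m - v n‖ < ε'/(3*(L₀+1)) := lt_of_lt_of_le hvmn (min_le_right _ _)
    have hkey := key m n hvmnρ
    have hFm : F (φ m) - c < ε'/3 := by
      have := hN₁ m hm1
      rw [Real.dist_eq] at this
      have := abs_lt.1 this
      linarith [this.2]
    have hFn : F (φ n) - c < ε'/3 := by
      have := hN₁ n hn1
      rw [Real.dist_eq] at this
      have := abs_lt.1 this
      linarith [this.2]
    have hLv : L₀ * ‖v m - v n‖ < ε'/3 := by
      have h1 : L₀ * ‖v m - v n‖ ≤ (L₀+1) * ‖v m - v n‖ := by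
        nlinarith [norm_nonneg (v m - v n)]
      have h2 : (L₀+1) * ‖v m - v n‖ < (L₀+1) * (ε'/(3*(L₀+1))) := by
        apply mul_lt_mul_of_pos_left hvmnε
        linarith
      have h3 : (L₀+1) * (ε'/(3*(L₀+1))) = ε'/3 := by
        field_simp
      linarith
    have hsq : 3*C/16 * ‖uu m - uu n‖^2 < ε' := by linarith
    have hsq2 : ‖uu m - uu n‖^2 < ε^2 := by
      rw [hε'def] at hsq
      nlinarith
    rw [dist_eq_norm]
    exact lt_of_pow_lt_pow_left₀ 2 (le_of_lt hε) hsq2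
  obtain ⟨u₀, hu₀⟩ := cauchySeq_tendsto_of_complete hCauchy
  have hφlim : Tendsto φ atTop (𝓝 (u₀ + (w:V))) := by
    have := hu₀.add hv
    apply this.congr
    intro k
    exact (hφvu k).symm
  have hlimmem : u₀ + (w:V) ∈ Metric.closedBall (0:V) ρ :=
    Metric.isClosed_closedBall.mem_of_tendsto hφlim
      (Eventually.of_forall fun k => hψmem (ns (ms k)))
  have hlimball : u₀ + (w:V) ∈ Metric.ball (0:V) r := by
    rw [Metric.mem_closedBall] at hlimmem
    rw [Metric.mem_ball]
    linarith
  have hFcont : ContinuousAt F (u₀ + (w:V)) :=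
    (hF.contDiffAt (hball.mem_nhds hlimball)).continuousAt
  have hFlim : F (u₀ + (w:V)) = c :=
    tendsto_nhds_unique (hFcont.tendsto.comp hφlim) hFφ
  have hzero : u₀ + (w:V) = 0 := by
    by_contra h
    have := hFpos _ hlimball h
    linarith
  rw [hzero] at hφlim
  exact hφlim
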